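/- Let M = (E, 𝓘) be a finite matroid, let S_1 and S_2 be two independent sets of M, let p ∈ [0,1], and let R be a random subset of E containing each element independently with probability p. Then there exists a (deterministic) map T : 2^E → 2^E such that the random set T(R) satisfies: (1) S_1 ∩ S_2 ⊆ T(R) with probability 1; (2) T(R) ∈ 𝓘 with probability 1; (3) T(R) ⊆ (S_1 ∩ R) ∪ S_2, and (S_1 \ S_2) ∩ R ⊆ T(R), so Pr[e ∈ T(R)] = p for every e ∈ S_1 \ S_2; and (4) Pr[f ∈ T(R)] ≥ 1 − p for every f ∈ S_2 \ S_1. -/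
import Mathlib


open Finset

noncomputable section

variable {E : Type*} [Fintype E] [DecidableEq E]

/-- Probability that an independent-inclusion random subset of `E`, in which each element `e`
is included independently with probability `π e`, is exactly the set `A`. -/
def prodWeight (π : E → ℝ) (A : Finset E) : ℝ :=
  (∏ e ∈ A, π e) * ∏ e ∈ Aᶜ, (1 - π e)

/-- Expectation of `g` under the independent-inclusion random subset with marginals `π`. -/
def expec (π : E → ℝ) (g : Finset E → ℝ) : ℝ :=
  ∑ A : Finset E, prodWeight π A * g A

/-- Total (additive) weight of a finite set. -/
def setWeight (w : E → ℝ) (T : Finset E) : ℝ := ∑ e ∈ T, w e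

/-- Value of a best feasible (w.r.t. `𝓘`) subset of `S`, for the objective `f`. -/
def bestVal (𝓘 : Set (Finset E)) (f : Finset E → ℝ) (S : Finset E) : ℝ :=
  sSup (f '' {T | T ⊆ S ∧ T ∈ 𝓘})

/-- A (finite) matroid on the ground set `E`, given by its independent sets. -/
structure FinMatroid (E : Type*) [Fintype E] [DecidableEq E] where
  Indep : Finset E → Prop
  empty_indep : Indep ∅
  indep_subset : ∀ ⦃S T : Finset E⦄, Indep T → S ⊆ T → Indep S
  indep_exchange : ∀ ⦃S T : Finset E⦄, Indep S → Indep T → S.card < T.card →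
    ∃ e ∈ T, e ∉ S ∧ Indep (insert e S)

/-- The rank function of a matroid: the maximum cardinality of an independent subset of `S`. -/
def FinMatroid.rank (M : FinMatroid E) (S : Finset E) : ℕ :=
  sSup {n | ∃ T ⊆ S, M.Indep T ∧ T.card = n}

/-- `I_1 ∪ ⋯ ∪ I_j` (sets are indexed starting from `1`). -/
def prefixUnion (I : ℕ → Finset E) (j : ℕ) : Finset E :=
  (Finset.Icc 1 j).biUnion I

/-- A nested system of spanning sets for the set system on ground set `G` with rank
function `rk`: each `I_j` lies outside `I_{1:j-1}` and is spanning (full rank) in the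
deletion minor obtained by removing `I_{1:j-1}` from `G`. -/
def IsNSS (rk : Finset E → ℕ) (G : Finset E) (τ : ℕ) (I : ℕ → Finset E) : Prop :=
  ∀ j ∈ Finset.Icc 1 τ,
    I j ⊆ G \ prefixUnion I (j - 1) ∧ rk (I j) = rk (G \ prefixUnion I (j - 1))

/-- `I` is a maximum-`w`-weight independent set of the restriction of `M` to `G`. -/
def IsMaxWeightIndep (M : FinMatroid E) (w : E → ℝ) (G : Finset E) (I : Finset E) : Prop :=
  I ⊆ G ∧ M.Indep I ∧ ∀ J ⊆ G, M.Indep J → setWeight w J ≤ setWeight w I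

/-- `I` is a maximum-`w`-weight base of the restriction (deletion minor) of `M` to `G`. -/
def IsMaxWeightBase (M : FinMatroid E) (w : E → ℝ) (G : Finset E) (I : Finset E) : Prop :=
  I ⊆ G ∧ M.Indep I ∧ M.rank I = M.rank G ∧
    ∀ J ⊆ G, M.Indep J → M.rank J = M.rank G → setWeight w J ≤ setWeight w I

/-- Bundle of properties of the exchange map used in the induction. -/
def Good (M : FinMatroid E) (p : ℝ) (S₁ S₂ P : Finset E) (T : Finset E → Finset E) : Prop :=
  (∀ A, S₁ ∩ S₂ ⊆ T A) ∧ (∀ A, P ⊆ T A) ∧ (∀ A, M.Indep (T A)) ∧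
  (∀ A, T A ⊆ (S₁ ∩ A) ∪ S₂) ∧ (∀ A, (S₁ \ S₂) ∩ A ⊆ T A) ∧
  (∀ A B, A ∩ (S₁ \ S₂) = B ∩ (S₁ \ S₂) → T A = T B) ∧
  (∀ f ∈ S₂ \ S₁, expec (fun _ => p) (fun A => if f ∉ T A then (1:ℝ) else 0) ≤ p)

lemma sum_prodWeight (π : E → ℝ) : ∑ A : Finset E, prodWeight π A = 1 := by
  have h := Finset.prod_add π (fun e => 1 - π e) (univ : Finset E)
  simp only [add_sub_cancel, Finset.prod_const_one] at h
  rw [Finset.powerset_univ] at h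
  rw [h]
  apply Finset.sum_congr rfl
  intro A _
  rw [prodWeight, Finset.compl_eq_univ_sdiff]

lemma prodWeight_nonneg {p : ℝ} (hp0 : 0 ≤ p) (hp1 : p ≤ 1) (A : Finset E) :
    0 ≤ prodWeight (fun _ => p) A := by
  apply mul_nonneg <;> apply Finset.prod_nonneg <;> intro i _ <;> linarith

lemma expec_zero (π : E → ℝ) : expec π (fun _ => (0:ℝ)) = 0 := by
  simp [expec]

lemma expec_one (π : E → ℝ) : expec π (fun _ => (1:ℝ)) = 1 := by
  simp only [expec, mul_one]; exact sum_prodWeight π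

lemma expec_ite (p : ℝ) (e : E) (g₁ g₀ : Finset E → ℝ)
    (h₁ : ∀ A, g₁ (insert e A) = g₁ A) (h₀ : ∀ A, g₀ (insert e A) = g₀ A) :
    expec (fun _ => p) (fun A => if e ∈ A then g₁ A else g₀ A)
      = p * expec (fun _ => p) g₁ + (1 - p) * expec (fun _ => p) g₀ := by
  have key : ∀ g : Finset E → ℝ,
      expec (fun _ => p) g
        = ∑ t ∈ ((univ : Finset E).erase e).powerset,
            (prodWeight (fun _ => p) t * g t
              + prodWeight (fun _ => p) (insert e t) * g (insert e t)) := by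
    intro g
    have h2 : ((univ : Finset E)).powerset = (insert e (univ.erase e)).powerset := by
      rw [Finset.insert_erase (Finset.mem_univ e)]
    rw [expec, ← Finset.powerset_univ (α := E), h2,
      Finset.sum_powerset_insert (Finset.notMem_erase e univ), ← Finset.sum_add_distrib]
  rw [key, key, key, Finset.mul_sum, Finset.mul_sum, ← Finset.sum_add_distrib]
  apply Finset.sum_congr rfl
  intro t ht
  have het : e ∉ t := fun h =>
    Finset.notMem_erase e univ (Finset.mem_powerset.mp ht h)
  have hc : e ∈ tᶜ := Finset.mem_compl.mpr het
  have hc2 : e ∉ (insert e t)ᶜ := fun h => (Finset.mem_compl.mp h) (Finset.mem_insert_self e t)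
  have hw1 : prodWeight (fun _ => p) (insert e t)
      = p * ((∏ _x ∈ t, p) * ∏ _x ∈ (insert e t)ᶜ, (1 - p)) := by
    rw [prodWeight, Finset.prod_insert het]; ring
  have hw0 : prodWeight (fun _ => p) t
      = (1 - p) * ((∏ _x ∈ t, p) * ∏ _x ∈ (insert e t)ᶜ, (1 - p)) := by
    rw [prodWeight]
    have : (tᶜ : Finset E) = insert e ((insert e t)ᶜ) := by
      rw [Finset.compl_insert, Finset.insert_erase hc]
    rw [this, Finset.prod_insert hc2]; ring
  simp only [het, if_false, Finset.mem_insert_self, if_true, h₁, h₀, hw0, hw1]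
  ring

lemma expec_mem (p : ℝ) (e : E) :
    expec (fun _ => p) (fun A => if e ∈ A then (1:ℝ) else 0) = p := by
  rw [expec_ite p e (fun _ => (1:ℝ)) (fun _ => (0:ℝ)) (fun _ => rfl) (fun _ => rfl),
    expec_one, expec_zero]
  ring

lemma expec_le_one {p : ℝ} (hp0 : 0 ≤ p) (hp1 : p ≤ 1) (g : Finset E → ℝ)
    (hg : ∀ A, g A = 0 ∨ g A = 1) :
    expec (fun _ => p) g ≤ 1 := by
  have h1 : expec (fun _ => p) g ≤ ∑ A : Finset E, prodWeight (fun _ => p) A := by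
    apply Finset.sum_le_sum
    intro A _
    have h := prodWeight_nonneg (E := E) hp0 hp1 A
    rcases hg A with h' | h' <;> rw [h'] <;> simp [h]
  calc _ ≤ _ := h1
    _ = 1 := sum_prodWeight _

lemma expec_compl (p : ℝ) (T : Finset E → Finset E) (f : E) :
    expec (fun _ => p) (fun A => if f ∈ T A then (1:ℝ) else 0)
      = 1 - expec (fun _ => p) (fun A => if f ∉ T A then (1:ℝ) else 0) := by
  have h : ∀ A : Finset E, (if f ∈ T A then (1:ℝ) else 0)
      = 1 - (if f ∉ T A then (1:ℝ) else 0) := by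
    intro A; by_cases hf : f ∈ T A <;> simp [hf]
  simp only [expec, h, mul_sub, mul_one, Finset.sum_sub_distrib]
  rw [sum_prodWeight]

/-- Extend an independent subset of `X` to a maximal one. -/
lemma exists_maximal_indep (M : FinMatroid E) (I X : Finset E) (hIX : I ⊆ X)
    (hI : M.Indep I) :
    ∃ J, I ⊆ J ∧ J ⊆ X ∧ M.Indep J ∧ ∀ y ∈ X, y ∉ J → ¬ M.Indep (insert y J) := by
  classical
  set F := X.powerset.filter (fun J => I ⊆ J ∧ M.Indep J) with hF
  have hne : F.Nonempty := ⟨I, by simp [hF, Finset.mem_powerset, hIX, hI]⟩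
  obtain ⟨J, hJF, hmax⟩ := Finset.exists_max_image F Finset.card hne
  simp only [hF, Finset.mem_filter, Finset.mem_powerset] at hJF
  refine ⟨J, hJF.2.1, hJF.1, hJF.2.2, ?_⟩
  intro y hyX hyJ hind
  have hmem : insert y J ∈ F := by
    simp only [hF, Finset.mem_filter, Finset.mem_powerset]
    exact ⟨Finset.insert_subset hyX hJF.1, hJF.2.1.trans (Finset.subset_insert y J), hind⟩
  have := hmax _ hmem
  rw [Finset.card_insert_of_notMem hyJ] at this
  omega

/-- A dependent set contains a minimal dependent set. -/
lemma exists_minimal_dep (M : FinMatroid E) :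
    ∀ D : Finset E, ¬ M.Indep D →
      ∃ C ⊆ D, ¬ M.Indep C ∧ ∀ y ∈ C, M.Indep (C.erase y) := by
  classical
  intro D
  induction D using Finset.strongInduction with
  | _ D ih =>
    intro hD
    by_cases h : ∀ y ∈ D, M.Indep (D.erase y)
    · exact ⟨D, Finset.Subset.refl D, hD, h⟩
    · push_neg at h
      obtain ⟨y, hyD, hy⟩ := h
      obtain ⟨C, hCsub, hC⟩ := ih (D.erase y) (Finset.erase_ssubset hyD) hy
      exact ⟨C, hCsub.trans (Finset.erase_subset y D), hC⟩

/-- Removing a suitable circuit element restores independence. -/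
lemma indep_insert_erase (M : FinMatroid E) (I : Finset E) (x : E) (hI : M.Indep I)
    (hx : x ∉ I) (C : Finset E) (hCsub : C ⊆ insert x I) (hCdep : ¬ M.Indep C)
    (hCmin : ∀ y ∈ C, M.Indep (C.erase y)) (f : E) (hfC : f ∈ C) (hfx : f ≠ x) :
    M.Indep (insert x (I.erase f)) := by
  classical
  have hfI : f ∈ I := by
    have := hCsub hfC
    rw [Finset.mem_insert] at this
    tauto
  set D := insert x (I.erase f) with hD
  have hCfD : C.erase f ⊆ D := by
    intro y hy
    rw [Finset.mem_erase] at hy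
    have := hCsub hy.2
    rw [Finset.mem_insert] at this
    rcases this with h | h
    · rw [hD, h]; exact Finset.mem_insert_self x _
    · exact Finset.mem_insert_of_mem (Finset.mem_erase.mpr ⟨hy.1, h⟩)
  obtain ⟨J, hCJ, hJD, hJind, hJmax⟩ :=
    exists_maximal_indep M (C.erase f) D hCfD (hCmin f hfC)
  by_cases hJeq : J = D
  · rw [← hJeq]; exact hJind
  · exfalso
    have hDcard : D.card = I.card := by
      rw [hD, Finset.card_insert_of_notMem (fun h => hx (Finset.mem_of_mem_erase h)),
        Finset.card_erase_of_mem hfI]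
      have : 0 < I.card := Finset.card_pos.mpr ⟨f, hfI⟩
      omega
    have hJcard : J.card < I.card := by
      have := Finset.card_lt_card (Finset.ssubset_iff_subset_ne.mpr ⟨hJD, hJeq⟩)
      omega
    obtain ⟨y, hyI, hyJ, hyind⟩ := M.indep_exchange hJind hI hJcard
    by_cases hyf : y = f
    · subst hyf
      have hCJ' : C ⊆ insert y J := by
        intro z hz
        by_cases hzy : z = y
        · rw [hzy]; exact Finset.mem_insert_self y J
        · exact Finset.mem_insert_of_mem (hCJ (Finset.mem_erase.mpr ⟨hzy, hz⟩))
      exact hCdep (M.indep_subset hyind hCJ')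
    · exact hJmax y (Finset.mem_insert_of_mem (Finset.mem_erase.mpr ⟨hyf, hyI⟩)) hyJ hyind

/-- Selection lemma: an exchange element `f` that can moreover be protected. -/
lemma exists_exchange (M : FinMatroid E) (S₁ S₂ P : Finset E)
    (h1P : M.Indep (S₁ ∪ P)) (hPS : P ⊆ S₂) (h2 : M.Indep S₂)
    (e : E) (he1 : e ∈ S₁) (he2 : e ∉ S₂) (hdep : ¬ M.Indep (insert e S₂)) :
    ∃ f, f ∈ S₂ ∧ f ∉ S₁ ∧ f ∉ P ∧ M.Indep (insert e (S₂.erase f)) ∧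
      M.Indep (insert f ((S₁.erase e) ∪ P)) := by
  classical
  set B := (S₁.erase e) ∪ P with hBdef
  have heP : e ∉ P := fun h => he2 (hPS h)
  have heB : e ∉ B := by
    rw [hBdef, Finset.mem_union]
    rintro (h | h)
    · exact (Finset.mem_erase.mp h).1 rfl
    · exact heP h
  have hBinsert : insert e B = S₁ ∪ P := by
    rw [hBdef, ← Finset.insert_union, Finset.insert_erase he1]
  have hBe : M.Indep (insert e B) := by rw [hBinsert]; exact h1P
  have hB : M.Indep B := M.indep_subset hBe (Finset.subset_insert e B)
  obtain ⟨C, hCsub, hCdep, hCmin⟩ := exists_minimal_dep M (insert e S₂) hdep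
  have heC : e ∈ C := by
    by_contra heC
    apply hCdep
    apply M.indep_subset h2
    intro y hy
    have := hCsub hy
    rw [Finset.mem_insert] at this
    rcases this with h | h
    · exact absurd (h ▸ hy) heC
    · exact h
  by_cases hex : ∃ f ∈ C, f ∈ S₂ ∧ f ∉ S₁ ∧ f ∉ P ∧ M.Indep (insert f B)
  · obtain ⟨f, hfC, hfS₂, hfS₁, hfP, hfB⟩ := hex
    have hfe : f ≠ e := fun h => he2 (h ▸ hfS₂)
    exact ⟨f, hfS₂, hfS₁, hfP,
      indep_insert_erase M S₂ e h2 he2 C hCsub hCdep hCmin f hfC hfe, hfB⟩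
  · exfalso
    push_neg at hex
    have hcl : ∀ x ∈ C.erase e, x ∈ B ∨ ¬ M.Indep (insert x B) := by
      intro x hx
      rw [Finset.mem_erase] at hx
      have hxS₂ : x ∈ S₂ := by
        have := hCsub hx.2
        rw [Finset.mem_insert] at this
        rcases this with h | h
        · exact absurd h hx.1
        · exact h
      by_cases hxS₁ : x ∈ S₁
      · left; rw [hBdef]; exact Finset.mem_union_left _ (Finset.mem_erase.mpr ⟨hx.1, hxS₁⟩)
      by_cases hxP : x ∈ P
      · left; rw [hBdef]; exact Finset.mem_union_right _ hxP
      · right; exact hex x hx.2 hxS₂ hxS₁ hxP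
    set X := insert e (B ∪ C.erase e) with hX
    have hCeX : C.erase e ⊆ X :=
      (Finset.subset_union_right).trans (Finset.subset_insert _ _)
    obtain ⟨J, hCJ, hJX, hJind, hJmax⟩ :=
      exists_maximal_indep M (C.erase e) X hCeX (hCmin e heC)
    by_cases heJ : e ∈ J
    · apply hCdep
      apply M.indep_subset hJind
      intro z hz
      by_cases hze : z = e
      · rw [hze]; exact heJ
      · exact hCJ (Finset.mem_erase.mpr ⟨hze, hz⟩)
    · have hJW : J ⊆ B ∪ C.erase e := by
        intro z hz
        have := hJX hz
        rw [hX, Finset.mem_insert] at this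
        rcases this with h | h
        · exact absurd (h ▸ hz) heJ
        · exact h
      have hJB : J.card ≤ B.card := by
        by_contra hlt
        push_neg at hlt
        obtain ⟨y, hyJ, hyB, hyind⟩ := M.indep_exchange hB hJind hlt
        have hyW : y ∈ B ∪ C.erase e := hJW hyJ
        rw [Finset.mem_union] at hyW
        rcases hyW with h | h
        · exact hyB h
        · rcases hcl y h with h' | h'
          · exact hyB h'
          · exact h' hyind
      have hcard : J.card < (insert e B).card := by
        rw [Finset.card_insert_of_notMem heB]; omega
      obtain ⟨y, hyeB, hyJ, hyind⟩ := M.indep_exchange hJind hBe hcard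
      have hyX : y ∈ X := by
        rw [hX]
        rw [Finset.mem_insert] at hyeB ⊢
        rcases hyeB with h | h
        · exact Or.inl h
        · exact Or.inr (Finset.mem_union_left _ h)
      exact hJmax y hyX hyJ hyind

/-- Gluing the two conditional branches of the inductive construction. -/
lemma glue (M : FinMatroid E) (p : ℝ) (hp0 : 0 ≤ p) (hp1 : p ≤ 1)
    (S₁ S₂ S₂' P P₀ : Finset E) (e : E)
    (he1 : e ∈ S₁) (he2 : e ∉ S₂) (heS₂' : e ∈ S₂')
    (hsub : S₂' ⊆ insert e S₂) (hcap : S₁ ∩ S₂ ⊆ S₂') (hPP₀ : P ⊆ P₀)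
    (hdiff : S₁ \ S₂' = (S₁ \ S₂).erase e)
    (hcover : ∀ f' ∈ S₂ \ S₁, f' ∈ S₂' ∨ f' ∈ P₀)
    (T₁ T₀ : Finset E → Finset E)
    (H₁ : Good M p S₁ S₂' P T₁) (H₀ : Good M p (S₁.erase e) S₂ P₀ T₀) :
    Good M p S₁ S₂ P (fun A => if e ∈ A then T₁ A else T₀ A) := by
  classical
  obtain ⟨h₁cap, h₁P, h₁ind, h₁sub, h₁dcap, h₁blind, h₁marg⟩ := H₁
  obtain ⟨h₀cap, h₀P, h₀ind, h₀sub, h₀dcap, h₀blind, h₀marg⟩ := H₀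
  have hd₀ : (S₁.erase e) \ S₂ = (S₁ \ S₂).erase e := by
    rw [Finset.erase_sdiff_comm]
  have heD : e ∈ S₁ \ S₂ := Finset.mem_sdiff.mpr ⟨he1, he2⟩
  have heD' : e ∉ S₁ \ S₂' := by rw [hdiff]; exact Finset.notMem_erase e _
  have heD₀ : e ∉ (S₁.erase e) \ S₂ := by rw [hd₀]; exact Finset.notMem_erase e _
  refine ⟨?_, ?_, ?_, ?_, ?_, ?_, ?_⟩
  · -- S₁ ∩ S₂ ⊆ T A
    intro A x hx
    obtain ⟨hx1, hx2⟩ := Finset.mem_inter.mp hx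
    by_cases he : e ∈ A <;> simp only [he, if_true, if_false]
    · exact h₁cap A (Finset.mem_inter.mpr ⟨hx1, hcap hx⟩)
    · have hxe : x ≠ e := fun h => he2 (h ▸ hx2)
      exact h₀cap A (Finset.mem_inter.mpr ⟨Finset.mem_erase.mpr ⟨hxe, hx1⟩, hx2⟩)
  · -- P ⊆ T A
    intro A x hx
    by_cases he : e ∈ A <;> simp only [he, if_true, if_false]
    · exact h₁P A hx
    · exact h₀P A (hPP₀ hx)
  · -- independence
    intro A
    by_cases he : e ∈ A <;> simp only [he, if_true, if_false]
    · exact h₁ind A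
    · exact h₀ind A
  · -- T A ⊆ (S₁ ∩ A) ∪ S₂
    intro A x hx
    by_cases he : e ∈ A <;> simp only [he, if_true, if_false] at hx
    · rcases Finset.mem_union.mp (h₁sub A hx) with h | h
      · exact Finset.mem_union_left _ h
      · rcases Finset.mem_insert.mp (hsub h) with h' | h'
        · exact Finset.mem_union_left _ (Finset.mem_inter.mpr ⟨h' ▸ he1, h' ▸ he⟩)
        · exact Finset.mem_union_right _ h'
    · rcases Finset.mem_union.mp (h₀sub A hx) with h | h
      · exact Finset.mem_union_left _
          (Finset.mem_inter.mpr ⟨Finset.mem_of_mem_erase (Finset.mem_inter.mp h).1,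
            (Finset.mem_inter.mp h).2⟩)
      · exact Finset.mem_union_right _ h
  · -- (S₁ \ S₂) ∩ A ⊆ T A
    intro A x hx
    obtain ⟨hx1, hx2⟩ := Finset.mem_inter.mp hx
    by_cases he : e ∈ A <;> simp only [he, if_true, if_false]
    · by_cases hxe : x = e
      · exact hxe ▸ h₁cap A (Finset.mem_inter.mpr ⟨he1, heS₂'⟩)
      · apply h₁dcap A
        apply Finset.mem_inter.mpr
        refine ⟨?_, hx2⟩
        rw [hdiff]
        exact Finset.mem_erase.mpr ⟨hxe, hx1⟩
    · have hxe : x ≠ e := fun h => he (h ▸ hx2)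
      apply h₀dcap A
      apply Finset.mem_inter.mpr
      refine ⟨?_, hx2⟩
      rw [hd₀]
      exact Finset.mem_erase.mpr ⟨hxe, hx1⟩
  · -- depends only on A ∩ (S₁ \ S₂)
    intro A B hAB
    have hinter : ∀ x, x ∈ A ∩ (S₁ \ S₂) ↔ x ∈ B ∩ (S₁ \ S₂) := fun x => by rw [hAB]
    have heAB : (e ∈ A) ↔ (e ∈ B) := by
      have := hinter e
      simp only [Finset.mem_inter, heD, and_true] at this
      exact this
    have hsmall : ∀ (D : Finset E), D ⊆ S₁ \ S₂ → A ∩ D = B ∩ D := by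
      intro D hD
      ext x
      simp only [Finset.mem_inter]
      constructor
      · intro hx
        have := (hinter x).mp (Finset.mem_inter.mpr ⟨hx.1, hD hx.2⟩)
        exact ⟨(Finset.mem_inter.mp this).1, hx.2⟩
      · intro hx
        have := (hinter x).mpr (Finset.mem_inter.mpr ⟨hx.1, hD hx.2⟩)
        exact ⟨(Finset.mem_inter.mp this).1, hx.2⟩
    by_cases he : e ∈ A
    · have heB : e ∈ B := heAB.mp he
      simp only [he, heB, if_true]
      apply h₁blind
      apply hsmall
      rw [hdiff]; exact Finset.erase_subset e _
    · have heB : e ∉ B := fun h => he (heAB.mpr h)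
      simp only [he, heB, if_false]
      apply h₀blind
      apply hsmall
      rw [hd₀]; exact Finset.erase_subset e _
  · -- the marginal bound
    intro f' hf'
    obtain ⟨hf'S₂, hf'S₁⟩ := Finset.mem_sdiff.mp hf'
    have hfun : (fun A => if f' ∉ (if e ∈ A then T₁ A else T₀ A) then (1:ℝ) else 0)
        = fun A => if e ∈ A then (if f' ∉ T₁ A then (1:ℝ) else 0)
            else (if f' ∉ T₀ A then (1:ℝ) else 0) := by
      funext A
      by_cases he : e ∈ A <;> simp only [he, if_true, if_false]
    have hb₁ : ∀ A, (if f' ∉ T₁ (insert e A) then (1:ℝ) else 0)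
        = (if f' ∉ T₁ A then (1:ℝ) else 0) := by
      intro A
      have : T₁ (insert e A) = T₁ A := by
        apply h₁blind
        exact Finset.insert_inter_of_notMem heD'
      rw [this]
    have hb₀ : ∀ A, (if f' ∉ T₀ (insert e A) then (1:ℝ) else 0)
        = (if f' ∉ T₀ A then (1:ℝ) else 0) := by
      intro A
      have : T₀ (insert e A) = T₀ A := by
        apply h₀blind
        exact Finset.insert_inter_of_notMem heD₀
      rw [this]
    rw [hfun, expec_ite p e _ _ hb₁ hb₀]
    rcases hcover f' hf' with hc | hc
    · have hE₁ : expec (fun _ => p) (fun A => if f' ∉ T₁ A then (1:ℝ) else 0) ≤ p :=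
        h₁marg f' (Finset.mem_sdiff.mpr ⟨hc, hf'S₁⟩)
      have hE₀ : expec (fun _ => p) (fun A => if f' ∉ T₀ A then (1:ℝ) else 0) ≤ p :=
        h₀marg f' (Finset.mem_sdiff.mpr ⟨hf'S₂, fun h => hf'S₁ (Finset.mem_of_mem_erase h)⟩)
      nlinarith
    · have hE₀ : (fun A => if f' ∉ T₀ A then (1:ℝ) else 0) = fun _ => (0:ℝ) := by
        funext A
        exact if_neg (not_not.mpr (h₀P A hc))
      rw [hE₀, expec_zero]
      have hE₁ : expec (fun _ => p) (fun A => if f' ∉ T₁ A then (1:ℝ) else 0) ≤ 1 := by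
        apply expec_le_one hp0 hp1
        intro A
        by_cases h : f' ∉ T₁ A <;> simp [h]
      nlinarith

/-- The inductive construction of the exchange map. -/
lemma exists_good (M : FinMatroid E) (p : ℝ) (hp0 : 0 ≤ p) (hp1 : p ≤ 1) :
    ∀ (n : ℕ) (S₁ S₂ P : Finset E), M.Indep (S₁ ∪ P) → M.Indep S₂ → P ⊆ S₂ →
      (S₁ \ S₂).card = n → ∃ T, Good M p S₁ S₂ P T := by
  classical
  intro n
  induction n with
  | zero =>
    intro S₁ S₂ P h1P h2 hPS hcard
    have hempty : S₁ \ S₂ = ∅ := Finset.card_eq_zero.mp hcard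
    refine ⟨fun _ => S₂, fun A => Finset.inter_subset_right, fun A => hPS,
      fun A => h2, fun A => Finset.subset_union_right, ?_, fun _ _ _ => rfl, ?_⟩
    · intro A
      rw [hempty, Finset.empty_inter]
      exact Finset.empty_subset _
    · intro f hf
      have hfS₂ : f ∈ S₂ := (Finset.mem_sdiff.mp hf).1
      have : (fun A : Finset E => if f ∉ S₂ then (1:ℝ) else 0) = fun _ => (0:ℝ) := by
        funext A
        exact if_neg (not_not.mpr hfS₂)
      rw [this, expec_zero]
      exact hp0
  | succ n ih =>
    intro S₁ S₂ P h1P h2 hPS hcard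
    obtain ⟨e, he⟩ : (S₁ \ S₂).Nonempty := Finset.card_pos.mp (by omega)
    obtain ⟨he1, he2⟩ := Finset.mem_sdiff.mp he
    have hcard₀ : ((S₁.erase e) \ S₂).card = n := by
      rw [Finset.erase_sdiff_comm, Finset.card_erase_of_mem he, hcard]; omega
    have h1P₀ : M.Indep ((S₁.erase e) ∪ P) :=
      M.indep_subset h1P (Finset.union_subset_union_left (Finset.erase_subset e S₁))
    by_cases hse : M.Indep (insert e S₂)
    · -- Case (a): e can simply be added to S₂.
      have hdiff : S₁ \ (insert e S₂) = (S₁ \ S₂).erase e := Finset.sdiff_insert S₁ S₂ e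
      obtain ⟨T₁, H₁⟩ := ih S₁ (insert e S₂) P h1P hse
        (hPS.trans (Finset.subset_insert e S₂))
        (by rw [hdiff, Finset.card_erase_of_mem he, hcard]; omega)
      obtain ⟨T₀, H₀⟩ := ih (S₁.erase e) S₂ P h1P₀ h2 hPS hcard₀
      exact ⟨_, glue M p hp0 hp1 S₁ S₂ (insert e S₂) P P e he1 he2
        (Finset.mem_insert_self e S₂) (Finset.Subset.refl _)
        (Finset.inter_subset_right.trans (Finset.subset_insert e S₂))
        (Finset.Subset.refl P) hdiff
        (fun f' hf' => Or.inl (Finset.mem_insert_of_mem (Finset.mem_sdiff.mp hf').1))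
        T₁ T₀ H₁ H₀⟩
    · -- Case (b): exchange e with a protected f.
      obtain ⟨f, hfS₂, hfS₁, hfP, hf1, hf2⟩ :=
        exists_exchange M S₁ S₂ P h1P hPS h2 e he1 he2 hse
      have hdiff : S₁ \ (insert e (S₂.erase f)) = (S₁ \ S₂).erase e := by
        rw [Finset.sdiff_insert]
        congr 1
        ext x
        simp only [Finset.mem_sdiff, Finset.mem_erase]
        constructor
        · intro hx
          refine ⟨hx.1, fun hxS₂ => ?_⟩
          by_cases hxf : x = f
          · exact hfS₁ (hxf ▸ hx.1)
          · exact hx.2 ⟨hxf, hxS₂⟩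
        · intro hx
          exact ⟨hx.1, fun h => hx.2 h.2⟩
      obtain ⟨T₁, H₁⟩ := ih S₁ (insert e (S₂.erase f)) P h1P hf1
        (fun x hx => Finset.mem_insert_of_mem
          (Finset.mem_erase.mpr ⟨fun hxf => hfP (hxf ▸ hx), hPS hx⟩))
        (by rw [hdiff, Finset.card_erase_of_mem he, hcard]; omega)
      obtain ⟨T₀, H₀⟩ := ih (S₁.erase e) S₂ (insert f P)
        (by rw [Finset.union_insert]; exact hf2) h2
        (Finset.insert_subset hfS₂ hPS) hcard₀
      refine ⟨_, glue M p hp0 hp1 S₁ S₂ (insert e (S₂.erase f)) P (insert f P) e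
        he1 he2 (Finset.mem_insert_self e _)
        (Finset.insert_subset_insert e (Finset.erase_subset f S₂)) ?_
        (Finset.subset_insert f P) hdiff ?_ T₁ T₀ H₁ H₀⟩
      · intro x hx
        obtain ⟨hx1, hx2⟩ := Finset.mem_inter.mp hx
        exact Finset.mem_insert_of_mem
          (Finset.mem_erase.mpr ⟨fun hxf => hfS₁ (hxf ▸ hx1), hx2⟩)
      · intro f' hf'
        obtain ⟨hf'S₂, hf'S₁⟩ := Finset.mem_sdiff.mp hf'
        by_cases hff : f' = f
        · exact Or.inr (hff ▸ Finset.mem_insert_self f P)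
        · exact Or.inl (Finset.mem_insert_of_mem (Finset.mem_erase.mpr ⟨hff, hf'S₂⟩))

/-- Basis exchange map for a single matroid: given independent sets
`S₁, S₂` of `M`, there is a deterministic map `T` on realizations of the random set `R`
such that always `S₁ ∩ S₂ ⊆ T(R)`, `T(R)` is independent, `T(R) ⊆ (S₁ ∩ R) ∪ S₂`, and
`(S₁ ∖ S₂) ∩ R ⊆ T(R)` (hence `Pr[e ∈ T(R)] = p` for `e ∈ S₁ ∖ S₂`), while
`Pr[f ∈ T(R)] ≥ 1 − p` for every `f ∈ S₂ ∖ S₁`. -/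
theorem stmt_9 (M : FinMatroid E) (S₁ S₂ : Finset E)
    (h1 : M.Indep S₁) (h2 : M.Indep S₂)
    (p : ℝ) (hp0 : 0 ≤ p) (hp1 : p ≤ 1) :
    ∃ T : Finset E → Finset E,
      (∀ A, S₁ ∩ S₂ ⊆ T A) ∧
      (∀ A, M.Indep (T A)) ∧
      (∀ A, T A ⊆ (S₁ ∩ A) ∪ S₂) ∧
      (∀ A, (S₁ \ S₂) ∩ A ⊆ T A) ∧
      (∀ e ∈ S₁ \ S₂,
        expec (fun _ => p) (fun A => if e ∈ T A then 1 else 0) = p) ∧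
      (∀ f ∈ S₂ \ S₁,
        1 - p ≤ expec (fun _ => p) (fun A => if f ∈ T A then 1 else 0)) := by
  classical
  obtain ⟨T, hcap, hP, hind, hsub, hdcap, hblind, hmarg⟩ :=
    exists_good M p hp0 hp1 ((S₁ \ S₂).card) S₁ S₂ ∅
      (by simpa using h1) h2 (Finset.empty_subset S₂) rfl
  refine ⟨T, hcap, hind, hsub, hdcap, ?_, ?_⟩
  · intro e he
    obtain ⟨he1, he2⟩ := Finset.mem_sdiff.mp he
    have hfun : (fun A => if e ∈ T A then (1:ℝ) else 0)
        = fun A => if e ∈ A then (1:ℝ) else 0 := by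
      funext A
      by_cases heA : e ∈ A
      · have : e ∈ T A := hdcap A (Finset.mem_inter.mpr ⟨he, heA⟩)
        simp [heA, this]
      · have : e ∉ T A := by
          intro h
          rcases Finset.mem_union.mp (hsub A h) with h' | h'
          · exact heA (Finset.mem_inter.mp h').2
          · exact he2 h'
        simp [heA, this]
    rw [hfun]
    exact expec_mem p e
  · intro f hf
    have := hmarg f hf
    rw [expec_compl]
    linarith
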